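/- arXiv:1707.06969 — 4 statements merged into one kernel-verified Lean document; each statement's English description precedes it below -/
import Mathlib

section
/- For ν > 0 and all z, w ∈ ℂ, ∑_{n=0}^∞ (z^n/n!) H_{n,m'}^ν(w, w̄) = ν^{m'} (w̄ - z)^{m'} e^{ν z w}. -/
open scoped Real
open MeasureTheory Complex

/-- The univariate complex Hermite polynomial
`H_{m,n}^ν(z, z̄) = (-1)^{m+n} e^{ν z z̄} ∂^{m+n}/(∂z̄^m ∂z^n)(e^{-ν z z̄})`,
given by its standard explicit closed form. -/
noncomputable def cHermite (ν : ℝ) (m n : ℕ) (z : ℂ) : ℂ :=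
  (m.factorial : ℂ) * (n.factorial : ℂ) *
    ∑ k ∈ Finset.range (min m n + 1),
      (-1 : ℂ) ^ k * (ν : ℂ) ^ (m + n - k) * z ^ (m - k) * (starRingEnd ℂ z) ^ (n - k) /
        ((k.factorial : ℂ) * ((m - k).factorial : ℂ) * ((n - k).factorial : ℂ))

theorem cHermite_generating_function_one_index (ν : ℝ) (hν : 0 < ν) (m' : ℕ) (z w : ℂ) :
    ∑' n : ℕ, z ^ n / (n.factorial : ℂ) * cHermite ν n m' w
      = (ν : ℂ) ^ m' * (starRingEnd ℂ w - z) ^ m' * Complex.exp ((ν : ℂ) * z * w) := by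
  set x : ℂ := (ν : ℂ) * z * w with hxdef
  set wb : ℂ := starRingEnd ℂ w with hwb
  set C : ℕ → ℂ := fun k =>
    (m'.choose k : ℂ) * (-((ν : ℂ) * z)) ^ k * ((ν : ℂ) * wb) ^ (m' - k) with hC
  set f : ℕ → ℕ → ℂ := fun n k =>
    if k ≤ n then C k * x ^ (n - k) / ((n - k).factorial : ℂ) else 0 with hfdef
  have hexp : Complex.exp x = ∑' j : ℕ, x ^ j / (j.factorial : ℂ) := by
    rw [Complex.exp_eq_exp_ℂ, NormedSpace.exp_eq_tsum_div]
  have hsummable : Summable fun j : ℕ => x ^ j / (j.factorial : ℂ) :=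
    NormedSpace.expSeries_div_summable x
  have key : ∀ n : ℕ, z ^ n / (n.factorial : ℂ) * cHermite ν n m' w
      = ∑ k ∈ Finset.range (m' + 1), f n k := by
    intro n
    rw [cHermite]
    have hsub : Finset.range (min n m' + 1) ⊆ Finset.range (m' + 1) := by
      apply Finset.range_subset_range.2; omega
    rw [← Finset.sum_subset hsub (by
      intro k hk hk2
      simp only [Finset.mem_range] at hk hk2
      have : ¬ k ≤ n := by omega
      simp [hfdef, this])]
    rw [Finset.mul_sum, Finset.mul_sum]
    apply Finset.sum_congr rfl
    intro k hk
    simp only [Finset.mem_range] at hk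
    have hk1 : k ≤ n := by omega
    have hk2 : k ≤ m' := by omega
    simp only [hfdef, if_pos hk1, hC]
    have hfac : ((m'.factorial : ℂ)) =
        (m'.choose k : ℂ) * (k.factorial : ℂ) * ((m' - k).factorial : ℂ) := by
      exact_mod_cast congrArg (Nat.cast (R := ℂ))
        (Nat.choose_mul_factorial_mul_factorial hk2).symm
    have e1 : n + m' - k = (n - k) + ((m' - k) + k) := by omega
    have e2 : z ^ n = z ^ (n - k) * z ^ k := by
      rw [← pow_add]; congr 1; omega
    rw [e1, pow_add, pow_add, hfac, e2, hxdef]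
    have h1 : ((n.factorial : ℂ)) ≠ 0 := Nat.cast_ne_zero.mpr (Nat.factorial_ne_zero _)
    have h2 : ((k.factorial : ℂ)) ≠ 0 := Nat.cast_ne_zero.mpr (Nat.factorial_ne_zero _)
    have h3 : (((n - k).factorial : ℂ)) ≠ 0 := Nat.cast_ne_zero.mpr (Nat.factorial_ne_zero _)
    have h4 : (((m' - k).factorial : ℂ)) ≠ 0 := Nat.cast_ne_zero.mpr (Nat.factorial_ne_zero _)
    field_simp
    ring
  rw [tsum_congr key]
  have hinner : ∀ k ∈ Finset.range (m' + 1), Summable fun n => f n k := by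
    intro k _
    have hinj : Function.Injective (· + k : ℕ → ℕ) := add_left_injective k
    refine (Function.Injective.summable_iff hinj ?_).mp ?_
    · intro n hn
      have : ¬ k ≤ n := by
        intro h
        exact hn ⟨n - k, Nat.sub_add_cancel h⟩
      simp [hfdef, this]
    · have : (fun j : ℕ => f (j + k) k) = fun j : ℕ => C k * (x ^ j / (j.factorial : ℂ)) := by
        funext j
        simp [hfdef, Nat.le_add_left, mul_div_assoc]
      show Summable ((fun n => f n k) ∘ (· + k))
      simp only [Function.comp_def]
      rw [this]
      exact hsummable.mul_left _
  rw [Summable.tsum_finsetSum hinner]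
  have hval : ∀ k ∈ Finset.range (m' + 1), ∑' n, f n k = C k * Complex.exp x := by
    intro k _
    have hinj : Function.Injective (· + k : ℕ → ℕ) := add_left_injective k
    rw [← Function.Injective.tsum_eq hinj (f := fun n => f n k) (by
      intro n hn
      have hkn : k ≤ n := by
        by_contra h
        simp [hfdef, h] at hn
      exact ⟨n - k, Nat.sub_add_cancel hkn⟩)]
    have : (fun j : ℕ => f (j + k) k) = fun j : ℕ => C k * (x ^ j / (j.factorial : ℂ)) := by
      funext j
      simp [hfdef, Nat.le_add_left, mul_div_assoc]
    rw [this, tsum_mul_left, ← hexp]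
  rw [Finset.sum_congr rfl hval, ← Finset.sum_mul]
  congr 1
  have := add_pow (-((ν : ℂ) * z)) ((ν : ℂ) * wb) m'
  have hrw : (-((ν : ℂ) * z) + (ν : ℂ) * wb) = (ν : ℂ) * (wb - z) := by ring
  rw [hrw, mul_pow] at this
  rw [this]
  apply Finset.sum_congr rfl
  intro k _
  simp only [hC]
  ring
end

section
/- For ν > 0, z ∈ ℂ, and real u with |u| < 1: ∑_{m,n=0}^∞ u^m |H_{m,n}^ν(z, z̄)|² / (ν^{m+n} m! n!) = e^{ν|z|²} / (1 - u). -/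
open scoped Real
open MeasureTheory Complex

open Finset

lemma altVandermonde (j : ℕ) : ∀ N c : ℕ, j ≤ N →
    ∑ b ∈ range (j+1), (-1:ℝ)^b * (j.choose b) * ((N-b).choose c)
      = if j ≤ c then (((N-j).choose (c-j) : ℕ) : ℝ) else 0 := by
  induction j with
  | zero => intro N c _; simp
  | succ j ih =>
    intro N c hN
    have hN1 : j ≤ N - 1 := by omega
    have e1 : ∑ b ∈ range (j+2), (-1:ℝ)^b * ((j+1).choose b) * ((N-b).choose c)
        = ((N).choose c : ℝ)
          + ∑ i ∈ range (j+1), (-1:ℝ)^(i+1) * ((j+1).choose (i+1)) * ((N-(i+1)).choose c) := by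
      rw [Finset.sum_range_succ' (fun b => (-1:ℝ)^b * ((j+1).choose b) * ((N-b).choose c)) (j+1)]
      simp [add_comm]
    have e2 : ∀ i ∈ range (j+1), (-1:ℝ)^(i+1) * ((j+1).choose (i+1)) * ((N-(i+1)).choose c)
        = -((-1:ℝ)^i * (j.choose i) * (((N-1)-i).choose c))
          - (-1:ℝ)^i * (j.choose (i+1)) * ((N-(i+1)).choose c) := by
      intro i hi
      have : ((j+1).choose (i+1) : ℝ) = (j.choose i : ℝ) + (j.choose (i+1) : ℝ) := by
        rw [Nat.choose_succ_succ]; push_cast; ring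
      have hn : N - (i+1) = (N-1) - i := by omega
      rw [this, hn]; ring
    have e3 : ∑ i ∈ range (j+1), (-1:ℝ)^i * (j.choose (i+1)) * ((N-(i+1)).choose c)
        = -(∑ b ∈ range (j+1), (-1:ℝ)^b * (j.choose b) * ((N-b).choose c) - (N.choose c : ℝ)) := by
      have hT : ∑ b ∈ range (j+2), (-1:ℝ)^b * (j.choose b) * ((N-b).choose c)
          = ∑ b ∈ range (j+1), (-1:ℝ)^b * (j.choose b) * ((N-b).choose c) := by
        rw [Finset.sum_range_succ]
        simp [Nat.choose_succ_self]
      have hf1 : ∀ i ∈ range (j+1), (-1:ℝ)^i * (j.choose (i+1)) * ((N-(i+1)).choose c)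
          = -((-1:ℝ)^(i+1) * (j.choose (i+1)) * ((N-(i+1)).choose c)) := by
        intro i _; ring
      rw [Finset.sum_congr rfl hf1, Finset.sum_neg_distrib]
      have hT2 : ∑ i ∈ range (j+1), (-1:ℝ)^(i+1) * (j.choose (i+1)) * ((N-(i+1)).choose c)
          = ∑ b ∈ range (j+2), (-1:ℝ)^b * (j.choose b) * ((N-b).choose c) - (N.choose c : ℝ) := by
        rw [Finset.sum_range_succ' (fun b => (-1:ℝ)^b * (j.choose b) * ((N-b).choose c)) (j+1)]
        simp
      rw [hT2, hT]
    rw [e1, Finset.sum_congr rfl e2, Finset.sum_sub_distrib, Finset.sum_neg_distrib]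
    rw [e3, ih (N-1) c hN1, ih N c (by omega)]
    by_cases hc : j + 1 ≤ c
    · rw [if_pos hc, if_pos (by omega), if_pos (by omega)]
      have pasc : (N-j).choose (c-j) = ((N-j)-1).choose ((c-j)-1) + ((N-j)-1).choose (c-j) := by
        have h1 : N - j = ((N-j)-1) + 1 := by omega
        have h2 : c - j = ((c-j)-1) + 1 := by omega
        rw [h1, h2]; simp [Nat.choose_succ_succ]
      have r1 : (N-1)-j = (N-j)-1 := by omega
      have r2 : c-(j+1) = (c-j)-1 := by omega
      have r3 : N-(j+1) = (N-j)-1 := by omega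
      rw [r1, r2, r3, pasc]
      push_cast
      ring
    · rw [if_neg hc]
      by_cases hc2 : j ≤ c
      · have hcj : c = j := by omega
        rw [if_pos hc2, if_pos hc2, hcj]
        simp
        ring
      · rw [if_neg hc2, if_neg hc2]; ring

lemma factR_ne (n : ℕ) : ((n.factorial : ℝ)) ≠ 0 :=
  Nat.cast_ne_zero.mpr (Nat.factorial_ne_zero n)

lemma csumLemma (m j a : ℕ) (haj : a ≤ j) (ham : a ≤ m) :
    ∑ b ∈ range (m+1), (if b ≤ j then (-1:ℝ)^b * (j.choose b) * ((m+j-a-b).choose (j-a)) else 0)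
      = if a = 0 then 1 else 0 := by
  have h1 : ∑ b ∈ range (m+1), (if b ≤ j then (-1:ℝ)^b * (j.choose b) * ((m+j-a-b).choose (j-a)) else 0)
      = ∑ b ∈ range (m+j+1), (if b ≤ j then (-1:ℝ)^b * (j.choose b) * ((m+j-a-b).choose (j-a)) else 0) := by
    apply Finset.sum_subset (by intro x hx; simp at hx ⊢; omega)
    intro b _ hb
    simp only [Finset.mem_range, not_lt] at hb
    by_cases hbj : b ≤ j
    · rw [if_pos hbj, Nat.choose_eq_zero_of_lt (show m+j-a-b < j-a by omega)]
      simp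
    · rw [if_neg hbj]
  have h2 : ∑ b ∈ range (m+j+1), (if b ≤ j then (-1:ℝ)^b * (j.choose b) * ((m+j-a-b).choose (j-a)) else 0)
      = ∑ b ∈ range (j+1), (-1:ℝ)^b * (j.choose b) * (((m+j-a)-b).choose (j-a)) := by
    rw [← Finset.sum_subset (s₁ := range (j+1)) (by intro x hx; simp at hx ⊢; omega)
      (by intro b _ hb; simp only [Finset.mem_range, not_lt] at hb; rw [if_neg (by omega)])]
    apply Finset.sum_congr rfl
    intro b hb
    simp only [Finset.mem_range] at hb
    rw [if_pos (by omega)]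
  rw [h1, h2, altVandermonde j (m+j-a) (j-a) (by omega)]
  by_cases ha : a = 0
  · subst ha
    rw [if_pos (by omega), if_pos rfl]
    simp
  · rw [if_neg (by omega), if_neg ha]

lemma combIdentity (m j : ℕ) :
    ∑ a ∈ range (m+1), ∑ b ∈ range (m+1),
      (if a ≤ j ∧ b ≤ j then
        (-1:ℝ)^(a+b) * ((m.factorial : ℝ) * ((m+j-a-b).factorial : ℝ)) /
          ((a.factorial : ℝ) * ((m-a).factorial : ℝ) * ((j-b).factorial : ℝ) *
            (b.factorial : ℝ) * ((m-b).factorial : ℝ) * ((j-a).factorial : ℝ))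
       else 0)
      = 1 / (j.factorial : ℝ) := by
  have key : ∀ a ∈ range (m+1), ∑ b ∈ range (m+1),
      (if a ≤ j ∧ b ≤ j then
        (-1:ℝ)^(a+b) * ((m.factorial : ℝ) * ((m+j-a-b).factorial : ℝ)) /
          ((a.factorial : ℝ) * ((m-a).factorial : ℝ) * ((j-b).factorial : ℝ) *
            (b.factorial : ℝ) * ((m-b).factorial : ℝ) * ((j-a).factorial : ℝ))
       else 0)
      = if a = 0 then 1 / (j.factorial : ℝ) else 0 := by
    intro a hamem
    simp only [Finset.mem_range] at hamem
    have ham : a ≤ m := by omega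
    by_cases haj : a ≤ j
    · have hterm : ∀ b ∈ range (m+1),
          (if a ≤ j ∧ b ≤ j then
            (-1:ℝ)^(a+b) * ((m.factorial : ℝ) * ((m+j-a-b).factorial : ℝ)) /
              ((a.factorial : ℝ) * ((m-a).factorial : ℝ) * ((j-b).factorial : ℝ) *
                (b.factorial : ℝ) * ((m-b).factorial : ℝ) * ((j-a).factorial : ℝ))
           else 0)
          = ((-1:ℝ)^a * (m.factorial : ℝ) /
              ((a.factorial : ℝ) * ((m-a).factorial : ℝ) * (j.factorial : ℝ))) *
            (if b ≤ j then (-1:ℝ)^b * (j.choose b) * ((m+j-a-b).choose (j-a)) else 0) := by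
        intro b hbmem
        simp only [Finset.mem_range] at hbmem
        have hbm : b ≤ m := by omega
        by_cases hbj : b ≤ j
        · rw [if_pos ⟨haj, hbj⟩, if_pos hbj]
          rw [Nat.cast_choose ℝ hbj, Nat.cast_choose ℝ (show j - a ≤ m+j-a-b by omega)]
          have e1 : m+j-a-b - (j-a) = m - b := by omega
          rw [e1, pow_add]
          field_simp
        · rw [if_neg (by tauto), if_neg hbj, mul_zero]
      rw [Finset.sum_congr rfl hterm, ← Finset.mul_sum, csumLemma m j a haj ham]
      by_cases ha : a = 0
      · subst ha
        rw [if_pos rfl, if_pos rfl, mul_one]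
        simp [factR_ne m]
        field_simp
      · rw [if_neg ha, if_neg ha, mul_zero]
    · have ha : a ≠ 0 := by omega
      rw [if_neg ha]
      apply Finset.sum_eq_zero
      intro b _
      rw [if_neg (by tauto)]
  rw [Finset.sum_congr rfl key, Finset.sum_ite_eq' (range (m+1)) 0
    (fun _ => 1 / (j.factorial : ℝ))]
  rw [if_pos (by simp)]

/-- Real-valued expansion term of `|H_{m,n}|^2 / (ν^{m+n} m! n!)`, with `r = ν‖z‖²`. -/
noncomputable def Aterm (r : ℝ) (m n k l : ℕ) : ℝ :=
  if k ≤ m ∧ k ≤ n ∧ l ≤ m ∧ l ≤ n then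
    (-1:ℝ)^(k+l) * ((m.factorial : ℝ) * (n.factorial : ℝ) * r^(m+n-k-l)) /
      ((k.factorial : ℝ) * ((m-k).factorial : ℝ) * ((n-k).factorial : ℝ) *
        (l.factorial : ℝ) * ((m-l).factorial : ℝ) * ((n-l).factorial : ℝ))
  else 0

/-- The same family reindexed by `j = m + n - k - l`. -/
noncomputable def Bterm (r : ℝ) (m j k l : ℕ) : ℝ :=
  if k ≤ m ∧ l ≤ m ∧ m ≤ j + k ∧ m ≤ j + l then
    (-1:ℝ)^(k+l) * ((m.factorial : ℝ) * ((j+k+l-m).factorial : ℝ) * r^j) /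
      ((k.factorial : ℝ) * ((m-k).factorial : ℝ) * ((j+l-m).factorial : ℝ) *
        (l.factorial : ℝ) * ((m-l).factorial : ℝ) * ((j+k-m).factorial : ℝ))
  else 0

lemma neg_one_pow_reflect (m a b : ℕ) (ha : a ≤ m) (hb : b ≤ m) :
    (-1:ℝ)^((m-a)+(m-b)) = (-1:ℝ)^(a+b) := by
  have e : ((m-a)+(m-b)) + (a+b) = 2*m := by omega
  have h1 : (-1:ℝ)^((m-a)+(m-b)) * (-1:ℝ)^(a+b) = 1 := by
    rw [← pow_add, e, pow_mul]; norm_num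
  have h2 : (-1:ℝ)^(a+b) * (-1:ℝ)^(a+b) = 1 := by
    rw [← pow_add, ← two_mul, pow_mul]; norm_num
  calc (-1:ℝ)^((m-a)+(m-b)) = (-1:ℝ)^((m-a)+(m-b)) * ((-1:ℝ)^(a+b) * (-1:ℝ)^(a+b)) := by
        rw [h2, mul_one]
    _ = ((-1:ℝ)^((m-a)+(m-b)) * (-1:ℝ)^(a+b)) * (-1:ℝ)^(a+b) := by ring
    _ = (-1:ℝ)^(a+b) := by rw [h1, one_mul]

lemma Bval (r : ℝ) (m j a b : ℕ) (ha : a ≤ m) (hb : b ≤ m) :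
    Bterm r m j (m-a) (m-b) = r^j *
      (if a ≤ j ∧ b ≤ j then
        (-1:ℝ)^(a+b) * ((m.factorial : ℝ) * ((m+j-a-b).factorial : ℝ)) /
          ((a.factorial : ℝ) * ((m-a).factorial : ℝ) * ((j-b).factorial : ℝ) *
            (b.factorial : ℝ) * ((m-b).factorial : ℝ) * ((j-a).factorial : ℝ))
       else 0) := by
  unfold Bterm
  by_cases hcond : a ≤ j ∧ b ≤ j
  · rw [if_pos ⟨by omega, by omega, by omega, by omega⟩, if_pos hcond]
    have e1 : m - (m-a) = a := by omega
    have e2 : m - (m-b) = b := by omega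
    have e3 : j + (m-b) - m = j - b := by omega
    have e4 : j + (m-a) - m = j - a := by omega
    have e5 : j + (m-a) + (m-b) - m = m+j-a-b := by omega
    rw [e1, e2, e3, e4, e5, neg_one_pow_reflect m a b ha hb]
    ring
  · rw [if_neg (by rintro ⟨h1, h2, h3, h4⟩; exact hcond ⟨by omega, by omega⟩),
      if_neg hcond, mul_zero]

lemma BsumFinite (r : ℝ) (m j : ℕ) :
    ∑ k ∈ range (m+1), ∑ l ∈ range (m+1), Bterm r m j k l
      = r^j / (j.factorial : ℝ) := by
  have hre : ∀ (g : ℕ → ℝ), ∑ k ∈ range (m+1), g k = ∑ k ∈ range (m+1), g (m - k) := by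
    intro g
    rw [← Finset.sum_range_reflect]
    apply Finset.sum_congr rfl
    intro i _
    have e : m + 1 - 1 - i = m - i := by omega
    rw [e]
  rw [hre (fun k => ∑ l ∈ range (m+1), Bterm r m j k l)]
  have step : ∀ a ∈ range (m+1), ∑ l ∈ range (m+1), Bterm r m j (m-a) l
      = ∑ b ∈ range (m+1), r^j *
        (if a ≤ j ∧ b ≤ j then
          (-1:ℝ)^(a+b) * ((m.factorial : ℝ) * ((m+j-a-b).factorial : ℝ)) /
            ((a.factorial : ℝ) * ((m-a).factorial : ℝ) * ((j-b).factorial : ℝ) *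
              (b.factorial : ℝ) * ((m-b).factorial : ℝ) * ((j-a).factorial : ℝ))
         else 0) := by
    intro a hamem
    simp only [Finset.mem_range] at hamem
    rw [hre (fun l => Bterm r m j (m-a) l)]
    apply Finset.sum_congr rfl
    intro b hbmem
    simp only [Finset.mem_range] at hbmem
    exact Bval r m j a b (by omega) (by omega)
  rw [Finset.sum_congr rfl step]
  have : ∑ a ∈ range (m+1), ∑ b ∈ range (m+1), r^j *
        (if a ≤ j ∧ b ≤ j then
          (-1:ℝ)^(a+b) * ((m.factorial : ℝ) * ((m+j-a-b).factorial : ℝ)) /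
            ((a.factorial : ℝ) * ((m-a).factorial : ℝ) * ((j-b).factorial : ℝ) *
              (b.factorial : ℝ) * ((m-b).factorial : ℝ) * ((j-a).factorial : ℝ))
         else 0)
      = r^j * ∑ a ∈ range (m+1), ∑ b ∈ range (m+1),
        (if a ≤ j ∧ b ≤ j then
          (-1:ℝ)^(a+b) * ((m.factorial : ℝ) * ((m+j-a-b).factorial : ℝ)) /
            ((a.factorial : ℝ) * ((m-a).factorial : ℝ) * ((j-b).factorial : ℝ) *
              (b.factorial : ℝ) * ((m-b).factorial : ℝ) * ((j-a).factorial : ℝ))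
         else 0) := by
    rw [Finset.mul_sum]
    apply Finset.sum_congr rfl
    intro a _
    rw [Finset.mul_sum]
  rw [this, combIdentity m j]
  ring

lemma Aterm_zero {r : ℝ} {m n k l : ℕ} (h : ¬(k ≤ m ∧ k ≤ n ∧ l ≤ m ∧ l ≤ n)) :
    Aterm r m n k l = 0 := if_neg h

lemma hermite_expand (ν : ℝ) (hν : 0 < ν) (z : ℂ) (m n : ℕ) :
    ‖cHermite ν m n z‖^2 / (ν^(m+n) * (m.factorial:ℝ) * (n.factorial:ℝ))
      = ∑ k ∈ range (m+1), ∑ l ∈ range (m+1), Aterm (ν * ‖z‖^2) m n k l := by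
  set r : ℝ := ν * ‖z‖^2 with hr
  have hres : ∑ k ∈ range (m+1), ∑ l ∈ range (m+1), Aterm r m n k l
      = ∑ k ∈ range (min m n + 1), ∑ l ∈ range (min m n + 1), Aterm r m n k l := by
    symm
    rw [Finset.sum_subset (show range (min m n + 1) ⊆ range (m+1) by
        intro x hx; simp at hx ⊢; omega)]
    · apply Finset.sum_congr rfl
      intro k hk
      simp only [Finset.mem_range] at hk
      by_cases hkn : k ≤ min m n
      · exact Finset.sum_subset (show range (min m n + 1) ⊆ range (m+1) by
            intro x hx; simp at hx ⊢; omega)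
          (by intro l _ hl; simp only [Finset.mem_range, not_lt] at hl
              exact Aterm_zero (by omega))
      · have h1 : ∑ l ∈ range (min m n + 1), Aterm r m n k l = 0 :=
          Finset.sum_eq_zero fun l _ => Aterm_zero (by omega)
        have h2 : ∑ l ∈ range (m + 1), Aterm r m n k l = 0 :=
          Finset.sum_eq_zero fun l _ => Aterm_zero (by omega)
        rw [h1, h2]
    · intro k _ hk
      simp only [Finset.mem_range, not_lt] at hk
      apply Finset.sum_eq_zero
      intro l _
      exact Aterm_zero (by omega)
  have hD : (ν^(m+n) * (m.factorial:ℝ) * (n.factorial:ℝ)) ≠ 0 := by positivity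
  have hz : z * (starRingEnd ℂ) z = ((‖z‖ : ℝ) : ℂ)^2 := by
    rw [Complex.mul_conj, Complex.normSq_eq_norm_sq]
    push_cast
    ring
  have hC : cHermite ν m n z * (starRingEnd ℂ) (cHermite ν m n z)
      = (((ν^(m+n) * (m.factorial:ℝ) * (n.factorial:ℝ)) *
          ∑ k ∈ range (min m n + 1), ∑ l ∈ range (min m n + 1), Aterm r m n k l : ℝ) : ℂ) := by
    unfold cHermite
    rw [map_mul, map_mul, map_sum]
    have hconj : ∀ l ∈ range (min m n + 1),
        (starRingEnd ℂ) ((-1:ℂ)^l * (ν:ℂ)^(m+n-l) * z^(m-l) * ((starRingEnd ℂ) z)^(n-l) /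
          ((l.factorial:ℂ) * ((m-l).factorial:ℂ) * ((n-l).factorial:ℂ)))
        = (-1:ℂ)^l * (ν:ℂ)^(m+n-l) * ((starRingEnd ℂ) z)^(m-l) * z^(n-l) /
          ((l.factorial:ℂ) * ((m-l).factorial:ℂ) * ((n-l).factorial:ℂ)) := by
      intro l _
      simp [map_div₀, map_mul, map_pow, Complex.conj_conj, Complex.conj_ofReal]
    rw [Finset.sum_congr rfl hconj]
    rw [show ((m.factorial:ℂ) * (n.factorial:ℂ) *
          ∑ k ∈ range (min m n + 1), (-1:ℂ)^k * (ν:ℂ)^(m+n-k) * z^(m-k) *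
            ((starRingEnd ℂ) z)^(n-k) /
              ((k.factorial:ℂ) * ((m-k).factorial:ℂ) * ((n-k).factorial:ℂ)))
        = ∑ k ∈ range (min m n + 1), (m.factorial:ℂ) * (n.factorial:ℂ) *
            ((-1:ℂ)^k * (ν:ℂ)^(m+n-k) * z^(m-k) * ((starRingEnd ℂ) z)^(n-k) /
              ((k.factorial:ℂ) * ((m-k).factorial:ℂ) * ((n-k).factorial:ℂ)))
      from Finset.mul_sum _ _ _]
    rw [show ((starRingEnd ℂ) (m.factorial:ℂ) * (starRingEnd ℂ) (n.factorial:ℂ) *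
          ∑ l ∈ range (min m n + 1), (-1:ℂ)^l * (ν:ℂ)^(m+n-l) * ((starRingEnd ℂ) z)^(m-l) *
            z^(n-l) / ((l.factorial:ℂ) * ((m-l).factorial:ℂ) * ((n-l).factorial:ℂ)))
        = ∑ l ∈ range (min m n + 1), (m.factorial:ℂ) * (n.factorial:ℂ) *
            ((-1:ℂ)^l * (ν:ℂ)^(m+n-l) * ((starRingEnd ℂ) z)^(m-l) * z^(n-l) /
              ((l.factorial:ℂ) * ((m-l).factorial:ℂ) * ((n-l).factorial:ℂ)))
      by rw [map_natCast, map_natCast]; exact Finset.mul_sum _ _ _]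
    rw [Finset.sum_mul_sum]
    have hterm : ∀ k ∈ range (min m n + 1), ∀ l ∈ range (min m n + 1),
        ((m.factorial:ℂ) * (n.factorial:ℂ) *
            ((-1:ℂ)^k * (ν:ℂ)^(m+n-k) * z^(m-k) * ((starRingEnd ℂ) z)^(n-k) /
              ((k.factorial:ℂ) * ((m-k).factorial:ℂ) * ((n-k).factorial:ℂ)))) *
          ((m.factorial:ℂ) * (n.factorial:ℂ) *
            ((-1:ℂ)^l * (ν:ℂ)^(m+n-l) * ((starRingEnd ℂ) z)^(m-l) * z^(n-l) /
              ((l.factorial:ℂ) * ((m-l).factorial:ℂ) * ((n-l).factorial:ℂ))))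
        = (((ν^(m+n) * (m.factorial:ℝ) * (n.factorial:ℝ)) * Aterm r m n k l : ℝ) : ℂ) := by
      intro k hk l hl
      simp only [Finset.mem_range] at hk hl
      have hkm : k ≤ m := by omega
      have hkn : k ≤ n := by omega
      have hlm : l ≤ m := by omega
      have hln : l ≤ n := by omega
      rw [Aterm, if_pos ⟨hkm, hkn, hlm, hln⟩]
      have hsign : (-1:ℂ)^k * (-1:ℂ)^l = (-1:ℂ)^(k+l) := (pow_add _ _ _).symm
      have hν2 : (ν:ℂ)^(m+n-k) * (ν:ℂ)^(m+n-l) = (ν:ℂ)^(m+n) * (ν:ℂ)^(m+n-k-l) := by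
        rw [← pow_add, ← pow_add]
        congr 1
        omega
      have hzp : z^(m-k) * ((starRingEnd ℂ) z)^(n-k) * (((starRingEnd ℂ) z)^(m-l) * z^(n-l))
          = (((‖z‖ : ℝ) : ℂ)^2)^(m+n-k-l) := by
        have e1 : z^(m-k) * z^(n-l) = z^(m+n-k-l) := by
          rw [← pow_add]; congr 1; omega
        have e2 : ((starRingEnd ℂ) z)^(n-k) * ((starRingEnd ℂ) z)^(m-l)
            = ((starRingEnd ℂ) z)^(m+n-k-l) := by
          rw [← pow_add]; congr 1; omega
        calc z^(m-k) * ((starRingEnd ℂ) z)^(n-k) * (((starRingEnd ℂ) z)^(m-l) * z^(n-l))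
            = (z^(m-k) * z^(n-l)) * (((starRingEnd ℂ) z)^(n-k) * ((starRingEnd ℂ) z)^(m-l)) := by
              ring
          _ = z^(m+n-k-l) * ((starRingEnd ℂ) z)^(m+n-k-l) := by rw [e1, e2]
          _ = (z * (starRingEnd ℂ) z)^(m+n-k-l) := (mul_pow _ _ _).symm
          _ = (((‖z‖ : ℝ) : ℂ)^2)^(m+n-k-l) := by rw [hz]
      have hkC : ((k.factorial:ℂ)) ≠ 0 := Nat.cast_ne_zero.mpr (Nat.factorial_ne_zero _)
      have hmkC : (((m-k).factorial:ℂ)) ≠ 0 := Nat.cast_ne_zero.mpr (Nat.factorial_ne_zero _)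
      have hnkC : (((n-k).factorial:ℂ)) ≠ 0 := Nat.cast_ne_zero.mpr (Nat.factorial_ne_zero _)
      have hlC : ((l.factorial:ℂ)) ≠ 0 := Nat.cast_ne_zero.mpr (Nat.factorial_ne_zero _)
      have hmlC : (((m-l).factorial:ℂ)) ≠ 0 := Nat.cast_ne_zero.mpr (Nat.factorial_ne_zero _)
      have hnlC : (((n-l).factorial:ℂ)) ≠ 0 := Nat.cast_ne_zero.mpr (Nat.factorial_ne_zero _)
      have hRHScast : (((ν^(m+n) * (m.factorial:ℝ) * (n.factorial:ℝ)) *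
            ((-1:ℝ)^(k+l) * ((m.factorial:ℝ) * (n.factorial:ℝ) * r^(m+n-k-l)) /
              ((k.factorial:ℝ) * ((m-k).factorial:ℝ) * ((n-k).factorial:ℝ) *
                (l.factorial:ℝ) * ((m-l).factorial:ℝ) * ((n-l).factorial:ℝ))) : ℝ) : ℂ)
          = ((m.factorial:ℂ) * (n.factorial:ℂ) * ((m.factorial:ℂ) * (n.factorial:ℂ))) *
              ((-1:ℂ)^(k+l) * (((ν:ℂ)^(m+n) * (ν:ℂ)^(m+n-k-l)) *
                (((‖z‖ : ℝ) : ℂ)^2)^(m+n-k-l))) /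
              ((k.factorial:ℂ) * ((m-k).factorial:ℂ) * ((n-k).factorial:ℂ) *
                ((l.factorial:ℂ) * ((m-l).factorial:ℂ) * ((n-l).factorial:ℂ))) := by
        rw [hr]
        push_cast
        ring
      rw [hRHScast, ← hsign, ← hν2, ← hzp]
      field_simp
    rw [Finset.sum_congr rfl (fun k hk => Finset.sum_congr rfl (fun l hl => hterm k hk l hl))]
    push_cast
    rw [Finset.mul_sum]
    apply Finset.sum_congr rfl
    intro k _
    rw [Finset.mul_sum]
  have habs : ‖cHermite ν m n z‖^2
      = (ν^(m+n) * (m.factorial:ℝ) * (n.factorial:ℝ)) *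
          ∑ k ∈ range (min m n + 1), ∑ l ∈ range (min m n + 1), Aterm r m n k l := by
    have h1 := hC
    rw [Complex.mul_conj] at h1
    have h2 : Complex.normSq (cHermite ν m n z)
        = (ν^(m+n) * (m.factorial:ℝ) * (n.factorial:ℝ)) *
            ∑ k ∈ range (min m n + 1), ∑ l ∈ range (min m n + 1), Aterm r m n k l := by
      exact_mod_cast h1
    rw [Complex.sq_norm]
    exact h2
  rw [habs, hres, mul_div_cancel_left₀ _ hD]

lemma Aterm_ne_zero_cond {r : ℝ} {m n k l : ℕ} (h : Aterm r m n k l ≠ 0) :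
    k ≤ m ∧ k ≤ n ∧ l ≤ m ∧ l ≤ n := by
  by_contra hc
  exact h (if_neg hc)

lemma Bterm_ne_zero_cond {r : ℝ} {m j k l : ℕ} (h : Bterm r m j k l ≠ 0) :
    k ≤ m ∧ l ≤ m ∧ m ≤ j + k ∧ m ≤ j + l := by
  by_contra hc
  exact h (if_neg hc)

lemma BAvalue (r : ℝ) (m j k l : ℕ) (h : k ≤ m ∧ l ≤ m ∧ m ≤ j + k ∧ m ≤ j + l) :
    Aterm r m (j+k+l-m) k l = Bterm r m j k l := by
  rw [Aterm, Bterm, if_pos h, if_pos ⟨h.1, by omega, h.2.1, by omega⟩]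
  have e1 : m + (j+k+l-m) - k - l = j := by omega
  have e2 : (j+k+l-m) - k = j + l - m := by omega
  have e3 : (j+k+l-m) - l = j + k - m := by omega
  rw [e1, e2, e3]

lemma Aterm_abs_le (r : ℝ) (hr : 0 ≤ r) (m k l : ℕ) (n : ℕ) :
    |Aterm r m n k l| ≤
      ((m.factorial : ℝ) * 2^l * r^(m-k) /
        (((m-k).factorial : ℝ) * (l.factorial : ℝ) * ((m-l).factorial : ℝ))) *
      ((2*r)^(n-l) / ((n-l).factorial : ℝ)) := by
  by_cases hcond : k ≤ m ∧ k ≤ n ∧ l ≤ m ∧ l ≤ n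
  · obtain ⟨hkm, hkn, hlm, hln⟩ := hcond
    rw [Aterm, if_pos ⟨hkm, hkn, hlm, hln⟩]
    have hX : (0:ℝ) ≤ (m.factorial : ℝ) * (n.factorial : ℝ) * r^(m+n-k-l) := by positivity
    have hY : (0:ℝ) < (k.factorial : ℝ) * ((m-k).factorial : ℝ) * ((n-k).factorial : ℝ) *
        (l.factorial : ℝ) * ((m-l).factorial : ℝ) * ((n-l).factorial : ℝ) := by positivity
    rw [abs_div, abs_mul, _root_.abs_pow, abs_neg, abs_one, one_pow, one_mul,
        _root_.abs_of_nonneg hX, _root_.abs_of_pos hY]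
    have hchoose : (n.factorial : ℝ)
        = (n.choose k : ℝ) * (k.factorial : ℝ) * ((n-k).factorial : ℝ) := by
      have h' := Nat.choose_mul_factorial_mul_factorial hkn
      exact_mod_cast h'.symm
    have hrsplit : r^(m+n-k-l) = r^(m-k) * r^(n-l) := by
      rw [← pow_add]
      congr 1
      omega
    have h2n : ((n.choose k : ℝ)) ≤ 2^l * 2^(n-l) := by
      have h1 : n.choose k ≤ 2^n := by
        calc n.choose k ≤ ∑ i ∈ range (n+1), n.choose i :=
              Finset.single_le_sum (f := fun i => n.choose i) (fun i _ => Nat.zero_le _)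
                (Finset.mem_range.mpr (by omega))
          _ = 2^n := Nat.sum_range_choose n
      have h2 : (2:ℝ)^l * 2^(n-l) = 2^n := by
        rw [← pow_add]
        congr 1
        omega
      rw [h2]
      exact_mod_cast h1
    set W : ℝ := (m.factorial : ℝ) * r^(m-k) * r^(n-l) /
        (((m-k).factorial : ℝ) * (l.factorial : ℝ) * ((m-l).factorial : ℝ) *
          ((n-l).factorial : ℝ)) with hWdef
    have hW : 0 ≤ W := by positivity
    have heq1 : (m.factorial : ℝ) * (n.factorial : ℝ) * r^(m+n-k-l) /
        ((k.factorial : ℝ) * ((m-k).factorial : ℝ) * ((n-k).factorial : ℝ) *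
          (l.factorial : ℝ) * ((m-l).factorial : ℝ) * ((n-l).factorial : ℝ))
        = (n.choose k : ℝ) * W := by
      rw [hchoose, hrsplit, hWdef]
      field_simp [factR_ne]
    have heq2 : ((m.factorial : ℝ) * 2^l * r^(m-k) /
        (((m-k).factorial : ℝ) * (l.factorial : ℝ) * ((m-l).factorial : ℝ))) *
        ((2*r)^(n-l) / ((n-l).factorial : ℝ)) = (2^l * 2^(n-l)) * W := by
      rw [mul_pow, hWdef]
      field_simp [factR_ne]
    rw [heq1, heq2]
    exact mul_le_mul_of_nonneg_right h2n hW
  · rw [Aterm, if_neg hcond, abs_zero]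
    positivity

lemma Aterm_summable_abs (r : ℝ) (hr : 0 ≤ r) (m k l : ℕ) :
    Summable (fun n => |Aterm r m n k l|) := by
  apply Summable.of_nonneg_of_le (fun n => abs_nonneg _) (Aterm_abs_le r hr m k l)
  apply Summable.mul_left
  have h0 : Summable (fun n : ℕ => (2*r)^((n + l) - l) / (((n + l) - l).factorial : ℝ)) := by
    simpa using Real.summable_pow_div_factorial (2*r)
  exact (summable_nat_add_iff l).mp h0

lemma Afam_summable (r : ℝ) (hr : 0 ≤ r) (m : ℕ) :
    Summable (fun p : ℕ × ℕ × ℕ => Aterm r m p.1 p.2.1 p.2.2) := by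
  rw [← summable_abs_iff]
  apply (summable_prod_of_nonneg (fun p => abs_nonneg _)).mpr
  constructor
  · intro n
    apply summable_of_ne_finset_zero (s := Finset.range (m+1) ×ˢ Finset.range (m+1))
    intro kl hkl
    simp only [Finset.mem_product, Finset.mem_range, not_and_or, not_lt] at hkl
    show |Aterm r m n kl.1 kl.2| = 0
    exact abs_eq_zero.mpr (Aterm_zero (by omega))
  · have heq : ∀ n : ℕ, ∑ kl ∈ Finset.range (m+1) ×ˢ Finset.range (m+1),
        |Aterm r m n kl.1 kl.2| = ∑' kl : ℕ × ℕ, |Aterm r m n kl.1 kl.2| := by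
      intro n
      symm
      apply tsum_eq_sum
      intro kl hkl
      simp only [Finset.mem_product, Finset.mem_range, not_and_or, not_lt] at hkl
      exact abs_eq_zero.mpr (Aterm_zero (by omega))
    exact Summable.congr
      (summable_sum (f := fun (kl : ℕ × ℕ) (n : ℕ) => |Aterm r m n kl.1 kl.2|)
        (fun kl _ => Aterm_summable_abs r hr m kl.1 kl.2)) heq

lemma Bfam_hasSum (r : ℝ) (hr : 0 ≤ r) (m : ℕ) :
    HasSum (fun p : ℕ × ℕ × ℕ => Bterm r m p.1 p.2.1 p.2.2)
      (∑' p : ℕ × ℕ × ℕ, Aterm r m p.1 p.2.1 p.2.2) := by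
  have hA := (Afam_summable r hr m).hasSum
  refine (hasSum_iff_hasSum_of_ne_zero_bij
    (f := fun p : ℕ × ℕ × ℕ => Aterm r m p.1 p.2.1 p.2.2)
    (g := fun p : ℕ × ℕ × ℕ => Bterm r m p.1 p.2.1 p.2.2)
    (fun x => (x.val.1 + x.val.2.1 + x.val.2.2 - m, x.val.2.1, x.val.2.2)) ?_ ?_ ?_).mp hA
  · rintro ⟨⟨j1, k1, l1⟩, hx⟩ ⟨⟨j2, k2, l2⟩, hy⟩ hxy
    have c1 : k1 ≤ m ∧ l1 ≤ m ∧ m ≤ j1 + k1 ∧ m ≤ j1 + l1 :=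
      Bterm_ne_zero_cond (Function.mem_support.mp hx)
    have c2 : k2 ≤ m ∧ l2 ≤ m ∧ m ≤ j2 + k2 ∧ m ≤ j2 + l2 :=
      Bterm_ne_zero_cond (Function.mem_support.mp hy)
    have hxy' : ((j1 + k1 + l1 - m, k1, l1) : ℕ × ℕ × ℕ) = (j2 + k2 + l2 - m, k2, l2) := hxy
    simp only [Prod.mk.injEq] at hxy'
    obtain ⟨e1, e2, e3⟩ := hxy'
    subst e2
    subst e3
    have hj : j1 = j2 := by omega
    subst hj
    rfl
  · rintro ⟨n, k, l⟩ hp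
    have c : k ≤ m ∧ k ≤ n ∧ l ≤ m ∧ l ≤ n :=
      Aterm_ne_zero_cond (Function.mem_support.mp hp)
    have hcond : k ≤ m ∧ l ≤ m ∧ m ≤ (m+n-k-l) + k ∧ m ≤ (m+n-k-l) + l :=
      ⟨c.1, c.2.2.1, by omega, by omega⟩
    have hval := BAvalue r m (m+n-k-l) k l hcond
    have hn : (m+n-k-l) + k + l - m = n := by omega
    rw [hn] at hval
    refine ⟨⟨(m+n-k-l, k, l), ?_⟩, ?_⟩
    · simp only [Function.mem_support]
      show Bterm r m (m+n-k-l) k l ≠ 0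
      rw [← hval]
      exact Function.mem_support.mp hp
    · show ((m+n-k-l) + k + l - m, k, l) = ((n, k, l) : ℕ × ℕ × ℕ)
      rw [hn]
  · rintro ⟨⟨j, k, l⟩, hx⟩
    exact BAvalue r m j k l (Bterm_ne_zero_cond (Function.mem_support.mp hx))

noncomputable def gfun (ν : ℝ) (z : ℂ) (m n : ℕ) : ℝ :=
  ‖cHermite ν m n z‖^2 / (ν^(m+n) * (m.factorial : ℝ) * (n.factorial : ℝ))

lemma key_hasSum (ν : ℝ) (hν : 0 < ν) (z : ℂ) (m : ℕ) :
    HasSum (gfun ν z m) (Real.exp (ν * ‖z‖^2)) := by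
  set r : ℝ := ν * ‖z‖^2 with hrdef
  have hr : 0 ≤ r := by positivity
  have hg : ∀ n, gfun ν z m n
      = ∑ kl ∈ Finset.range (m+1) ×ˢ Finset.range (m+1), Aterm r m n kl.1 kl.2 := by
    intro n
    rw [gfun, hermite_expand ν hν z m n, Finset.sum_product]
  have hgsummable : Summable (fun n => ∑ kl ∈ Finset.range (m+1) ×ˢ Finset.range (m+1),
      Aterm r m n kl.1 kl.2) :=
    summable_sum (f := fun (kl : ℕ × ℕ) (n : ℕ) => Aterm r m n kl.1 kl.2)
      (fun kl _ => (Aterm_summable_abs r hr m kl.1 kl.2).of_abs)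
  have hA := Afam_summable r hr m
  have hperN : ∀ n : ℕ, Summable (fun kl : ℕ × ℕ => Aterm r m n kl.1 kl.2) := by
    intro n
    apply summable_of_ne_finset_zero (s := Finset.range (m+1) ×ˢ Finset.range (m+1))
    intro kl hkl
    simp only [Finset.mem_product, Finset.mem_range, not_and_or, not_lt] at hkl
    exact Aterm_zero (by omega)
  have h1 : ∑' p : ℕ × ℕ × ℕ, Aterm r m p.1 p.2.1 p.2.2
      = ∑' n, ∑ kl ∈ Finset.range (m+1) ×ˢ Finset.range (m+1), Aterm r m n kl.1 kl.2 := by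
    rw [Summable.tsum_prod' hA (fun n => hperN n)]
    apply tsum_congr
    intro n
    apply tsum_eq_sum
    intro kl hkl
    simp only [Finset.mem_product, Finset.mem_range, not_and_or, not_lt] at hkl
    show Aterm r m n kl.1 kl.2 = 0
    exact Aterm_zero (by omega)
  have hB := Bfam_hasSum r hr m
  have h2 : ∑' p : ℕ × ℕ × ℕ, Aterm r m p.1 p.2.1 p.2.2 = Real.exp r := by
    rw [← hB.tsum_eq]
    have hperJ : ∀ j : ℕ, Summable (fun kl : ℕ × ℕ => Bterm r m j kl.1 kl.2) := by
      intro j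
      apply summable_of_ne_finset_zero (s := Finset.range (m+1) ×ˢ Finset.range (m+1))
      intro kl hkl
      simp only [Finset.mem_product, Finset.mem_range, not_and_or, not_lt] at hkl
      exact if_neg (by omega)
    rw [Summable.tsum_prod' hB.summable hperJ]
    have h4 : ∀ j : ℕ, ∑' kl : ℕ × ℕ, Bterm r m j kl.1 kl.2 = r^j / (j.factorial : ℝ) := by
      intro j
      rw [tsum_eq_sum (s := Finset.range (m+1) ×ˢ Finset.range (m+1))
        (fun kl hkl => by
          simp only [Finset.mem_product, Finset.mem_range, not_and_or, not_lt] at hkl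
          show Bterm r m j kl.1 kl.2 = 0
          exact if_neg (by omega))]
      rw [Finset.sum_product]
      exact BsumFinite r m j
    rw [tsum_congr h4]
    rw [Real.exp_eq_exp_ℝ, NormedSpace.exp_eq_tsum_div]
  have htsum : ∑' n, ∑ kl ∈ Finset.range (m+1) ×ˢ Finset.range (m+1), Aterm r m n kl.1 kl.2
      = Real.exp r := h1.symm.trans h2
  have heqfun : gfun ν z m
      = (fun n => ∑ kl ∈ Finset.range (m+1) ×ˢ Finset.range (m+1), Aterm r m n kl.1 kl.2) :=
    funext hg
  rw [heqfun, ← htsum]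
  exact hgsummable.hasSum

lemma gfun_nonneg (ν : ℝ) (hν : 0 < ν) (z : ℂ) (m n : ℕ) : 0 ≤ gfun ν z m n := by
  unfold gfun
  positivity

theorem first_mehler_formula_diagonal (ν : ℝ) (hν : 0 < ν) (u : ℝ) (hu : |u| < 1) (z : ℂ) :
    ∑' p : ℕ × ℕ, u ^ p.1 * ‖cHermite ν p.1 p.2 z‖ ^ 2 /
        (ν ^ (p.1 + p.2) * (p.1.factorial : ℝ) * (p.2.factorial : ℝ))
      = Real.exp (ν * ‖z‖ ^ 2) / (1 - u) := by
  have hkey : ∀ m : ℕ, HasSum (gfun ν z m) (Real.exp (ν * ‖z‖^2)) := key_hasSum ν hν z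
  set r : ℝ := ν * ‖z‖^2 with hrdef
  have hfg : ∀ p : ℕ × ℕ, u ^ p.1 * ‖cHermite ν p.1 p.2 z‖^2 /
      (ν^(p.1+p.2) * (p.1.factorial : ℝ) * (p.2.factorial : ℝ)) = u ^ p.1 * gfun ν z p.1 p.2 :=
    fun p => mul_div_assoc _ _ _
  have habs : ∀ p : ℕ × ℕ, |u ^ p.1 * gfun ν z p.1 p.2| = |u| ^ p.1 * gfun ν z p.1 p.2 := by
    intro p
    rw [abs_mul, _root_.abs_pow, _root_.abs_of_nonneg (gfun_nonneg ν hν z p.1 p.2)]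
  have hsummable_abs : Summable (fun p : ℕ × ℕ => |u| ^ p.1 * gfun ν z p.1 p.2) := by
    apply (summable_prod_of_nonneg
      (fun p => mul_nonneg (pow_nonneg (abs_nonneg u) _) (gfun_nonneg ν hν z _ _))).mpr
    constructor
    · intro m
      show Summable fun n => |u| ^ m * gfun ν z m n
      exact ((hkey m).summable).mul_left (|u| ^ m)
    · have hgeo : Summable (fun m : ℕ => |u| ^ m) :=
        summable_geometric_of_abs_lt_one (by rwa [_root_.abs_abs])
      apply Summable.congr (hgeo.mul_right (Real.exp r))
      intro m
      show |u| ^ m * Real.exp r = ∑' n, |u| ^ m * gfun ν z m n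
      rw [tsum_mul_left, (hkey m).tsum_eq]
  have hsummable : Summable (fun p : ℕ × ℕ => u ^ p.1 * gfun ν z p.1 p.2) := by
    rw [← summable_abs_iff]
    exact Summable.congr hsummable_abs (fun p => (habs p).symm)
  calc ∑' p : ℕ × ℕ, u ^ p.1 * ‖cHermite ν p.1 p.2 z‖ ^ 2 /
        (ν ^ (p.1 + p.2) * (p.1.factorial : ℝ) * (p.2.factorial : ℝ))
      = ∑' p : ℕ × ℕ, u ^ p.1 * gfun ν z p.1 p.2 := tsum_congr hfg
    _ = ∑' m, ∑' n, u ^ m * gfun ν z m n :=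
        Summable.tsum_prod' hsummable (fun m => ((hkey m).summable).mul_left (u ^ m))
    _ = ∑' m : ℕ, u ^ m * Real.exp r := by
        apply tsum_congr
        intro m
        rw [tsum_mul_left, (hkey m).tsum_eq]
    _ = (∑' m : ℕ, u ^ m) * Real.exp r := tsum_mul_right
    _ = (1 - u)⁻¹ * Real.exp r := by rw [tsum_geometric_of_abs_lt_one hu]
    _ = Real.exp r / (1 - u) := by rw [div_eq_mul_inv, mul_comm]
end

section
/- For ν > 0, the squared norm of H_{m,n}^ν in L²(ℂ, e^{-ν|z|²} dλ) equals (π/ν) ν^{m+n} m! n!, i.e., ∫_ℂ |H_{m,n}^ν(z, z̄)|² e^{-ν|z|²} dλ(z) = (π/ν) ν^{m+n} m! n!. -/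
open scoped Real
open MeasureTheory Complex

lemma key_binom (m : ℕ) : ∀ b c : ℕ, m ≤ c →
    ∑ l ∈ Finset.range (m + 1), (-1 : ℤ) ^ l * (m.choose l) * ((c - l).choose b)
      = if m ≤ b then (((c - m).choose (b - m) : ℕ) : ℤ) else 0 := by
  induction m with
  | zero => intro b c _; simp
  | succ m ih =>
    intro b c hc
    have hL : ∑ x ∈ Finset.range (m + 1),
        (-1 : ℤ) ^ (x + 1) * (((m + 1).choose (x + 1) : ℕ) : ℤ) * ((c - (x + 1)).choose b)
        = (∑ x ∈ Finset.range (m + 1), (-1 : ℤ) ^ (x + 1) * (m.choose (x + 1)) * ((c - (x + 1)).choose b))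
          - ∑ x ∈ Finset.range (m + 1), (-1 : ℤ) ^ x * (m.choose x) * ((c - 1 - x).choose b) := by
      rw [← Finset.sum_sub_distrib]
      refine Finset.sum_congr rfl fun x hx => ?_
      have e : c - (x + 1) = c - 1 - x := by omega
      rw [Nat.choose_succ_succ, e]
      push_cast; ring
    have hA : (∑ x ∈ Finset.range (m + 1), (-1 : ℤ) ^ (x + 1) * (m.choose (x + 1)) * ((c - (x + 1)).choose b))
          + (-1 : ℤ) ^ 0 * (((m + 1).choose 0 : ℕ) : ℤ) * ((c - 0).choose b)
        = ∑ l ∈ Finset.range (m + 1), (-1 : ℤ) ^ l * (m.choose l) * ((c - l).choose b) := by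
      rw [Finset.sum_range_succ]
      rw [Finset.sum_range_succ' (fun l => (-1 : ℤ) ^ l * (m.choose l) * ((c - l).choose b))]
      simp [Nat.choose_succ_self]
    rw [Finset.sum_range_succ'
      (fun l => (-1 : ℤ) ^ l * (((m + 1).choose l : ℕ) : ℤ) * ((c - l).choose b)), hL]
    have key1 := ih b c (by omega)
    have key2 := ih b (c - 1) (by omega)
    rw [sub_add_eq_add_sub, hA, key1, key2]
    by_cases hb : m + 1 ≤ b
    · rw [if_pos (by omega : m ≤ b), if_pos (by omega : m ≤ b), if_pos hb]
      have e1 : c - m = (c - (m + 1)) + 1 := by omega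
      have e2 : b - m = (b - (m + 1)) + 1 := by omega
      have e3 : c - 1 - m = c - (m + 1) := by omega
      rw [e1, e2, e3, Nat.choose_succ_succ]
      push_cast; ring
    · rw [if_neg hb]
      by_cases hb' : m ≤ b
      · have : b = m := by omega
        subst this
        rw [if_pos le_rfl, if_pos le_rfl]
        simp
      · rw [if_neg hb', if_neg hb']; ring

lemma innerAux (m n k : ℕ) (hk : k ≤ m) (hmn : m ≤ n) :
    ∑ l ∈ Finset.range (m + 1),
      (-1 : ℝ) ^ l * ((m + n - k - l).factorial : ℝ) /
        ((l.factorial : ℝ) * ((m - l).factorial : ℝ) * ((n - l).factorial : ℝ))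
    = if k = 0 then 1 else 0 := by
  have key := key_binom m (m - k) (m + n - k) (by omega)
  have hterm : ∀ l ∈ Finset.range (m + 1),
      (-1 : ℝ) ^ l * ((m + n - k - l).factorial : ℝ) /
        ((l.factorial : ℝ) * ((m - l).factorial : ℝ) * ((n - l).factorial : ℝ))
      = (((m - k).factorial : ℝ) / (m.factorial : ℝ)) *
          ((-1 : ℝ) ^ l * (m.choose l : ℝ) * ((m + n - k - l).choose (m - k) : ℝ)) := by
    intro l hl
    rw [Finset.mem_range] at hl
    have hlm : l ≤ m := by omega
    rw [Nat.cast_choose ℝ hlm, Nat.cast_choose ℝ (show m - k ≤ m + n - k - l by omega)]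
    have e1 : m + n - k - l - (m - k) = n - l := by omega
    rw [e1]
    have f1 : (l.factorial : ℝ) ≠ 0 := Nat.cast_ne_zero.mpr (Nat.factorial_ne_zero l)
    have f2 : ((m - l).factorial : ℝ) ≠ 0 := Nat.cast_ne_zero.mpr (Nat.factorial_ne_zero _)
    have f3 : ((n - l).factorial : ℝ) ≠ 0 := Nat.cast_ne_zero.mpr (Nat.factorial_ne_zero _)
    have f4 : ((m - k).factorial : ℝ) ≠ 0 := Nat.cast_ne_zero.mpr (Nat.factorial_ne_zero _)
    have f5 : (m.factorial : ℝ) ≠ 0 := Nat.cast_ne_zero.mpr (Nat.factorial_ne_zero _)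
    field_simp
  rw [Finset.sum_congr rfl hterm, ← Finset.mul_sum]
  have hcast : ∑ l ∈ Finset.range (m + 1),
      (-1 : ℝ) ^ l * (m.choose l : ℝ) * ((m + n - k - l).choose (m - k) : ℝ)
      = ((∑ l ∈ Finset.range (m + 1),
          (-1 : ℤ) ^ l * (m.choose l) * (((m + n - k) - l).choose (m - k)) : ℤ) : ℝ) := by
    push_cast
    refine Finset.sum_congr rfl fun l hl => ?_
    have : m + n - k - l = (m + n - k) - l := by omega
    rw [this]
  rw [hcast, key]
  by_cases hk0 : k = 0
  · subst hk0
    simp only [Nat.sub_zero] at *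
    rw [if_pos le_rfl]
    have e : m + n - m = n := by omega
    rw [e, Nat.sub_self, Nat.choose_zero_right]
    have f5 : (m.factorial : ℝ) ≠ 0 := Nat.cast_ne_zero.mpr (Nat.factorial_ne_zero _)
    simp [div_self f5]
  · rw [if_neg (by omega), if_neg hk0]
    simp

lemma comb_aux (m n : ℕ) (hmn : m ≤ n) :
    ∑ k ∈ Finset.range (m + 1), ∑ l ∈ Finset.range (m + 1),
      (-1 : ℝ) ^ (k + l) * ((m + n - k - l).factorial : ℝ) /
        (((k.factorial : ℝ) * ((m - k).factorial : ℝ) * ((n - k).factorial : ℝ)) *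
         ((l.factorial : ℝ) * ((m - l).factorial : ℝ) * ((n - l).factorial : ℝ)))
    = 1 / ((m.factorial : ℝ) * (n.factorial : ℝ)) := by
  have h : ∀ k ∈ Finset.range (m + 1),
      ∑ l ∈ Finset.range (m + 1),
        (-1 : ℝ) ^ (k + l) * ((m + n - k - l).factorial : ℝ) /
          (((k.factorial : ℝ) * ((m - k).factorial : ℝ) * ((n - k).factorial : ℝ)) *
           ((l.factorial : ℝ) * ((m - l).factorial : ℝ) * ((n - l).factorial : ℝ)))
      = ((-1 : ℝ) ^ k / ((k.factorial : ℝ) * ((m - k).factorial : ℝ) * ((n - k).factorial : ℝ)))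
          * (if k = 0 then 1 else 0) := by
    intro k hk
    rw [Finset.mem_range] at hk
    rw [← innerAux m n k (by omega) hmn, Finset.mul_sum]
    refine Finset.sum_congr rfl fun l hl => ?_
    rw [pow_add]
    field_simp
  rw [Finset.sum_congr rfl h, Finset.sum_eq_single 0]
  · simp
  · intro k _ hk0; rw [if_neg hk0, mul_zero]
  · intro h0; exact absurd (Finset.mem_range.mpr (by omega)) h0

lemma comb (m n : ℕ) :
    ∑ k ∈ Finset.range (min m n + 1), ∑ l ∈ Finset.range (min m n + 1),
      (-1 : ℝ) ^ (k + l) * ((m + n - k - l).factorial : ℝ) /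
        (((k.factorial : ℝ) * ((m - k).factorial : ℝ) * ((n - k).factorial : ℝ)) *
         ((l.factorial : ℝ) * ((m - l).factorial : ℝ) * ((n - l).factorial : ℝ)))
    = 1 / ((m.factorial : ℝ) * (n.factorial : ℝ)) := by
  rcases le_total m n with h | h
  · rw [min_eq_left h]; exact comb_aux m n h
  · rw [min_eq_right h, mul_comm ((m.factorial : ℝ)), ← comb_aux n m h]
    refine Finset.sum_congr rfl fun k _ => Finset.sum_congr rfl fun l _ => ?_
    rw [Nat.add_comm m n]
    ring

lemma moment (ν : ℝ) (hν : 0 < ν) (A : ℕ) :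
    ∫ z : ℂ, ‖z‖ ^ (2 * A) * Real.exp (-ν * ‖z‖ ^ 2)
      = π * (A.factorial : ℝ) / ν ^ (A + 1) := by
  have key := Complex.integral_rpow_mul_exp_neg_mul_rpow (p := 2) (q := (2 * A : ℝ))
    one_le_two (lt_of_lt_of_le (by norm_num : (-2:ℝ) < 0) (by positivity)) hν
  have h1 : ∀ z : ℂ, ‖z‖ ^ ((2 * A : ℕ) : ℝ) * Real.exp (-ν * ‖z‖ ^ (2 : ℝ))
      = ‖z‖ ^ (2 * A) * Real.exp (-ν * ‖z‖ ^ 2) := by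
    intro z
    rw [Real.rpow_natCast, show ((2:ℝ)) = ((2:ℕ) : ℝ) by norm_num, Real.rpow_natCast]
  rw [show ((2 * A : ℝ)) = ((2 * A : ℕ) : ℝ) by push_cast; ring] at key
  simp_rw [h1] at key
  rw [key]
  have e1 : (-(((2 * A : ℕ) : ℝ) + 2) / 2) = -(((A : ℕ) : ℝ) + 1) := by push_cast; ring
  have e2 : ((((2 * A : ℕ) : ℝ)) + 2) / 2 = ((A : ℕ) : ℝ) + 1 := by push_cast; ring
  rw [e1, e2, Real.Gamma_nat_eq_factorial, Real.rpow_neg hν.le,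
    show (((A : ℕ) : ℝ) + 1) = (((A + 1 : ℕ)) : ℝ) by push_cast; ring, Real.rpow_natCast]
  field_simp

lemma moment_integrable (ν : ℝ) (hν : 0 < ν) (A : ℕ) :
    Integrable (fun z : ℂ => ‖z‖ ^ (2 * A) * Real.exp (-ν * ‖z‖ ^ 2)) := by
  have hint : Integrable (fun z : ℂ => Real.exp (-(ν/2) * ‖z‖ ^ 2)) := by
    have h := (GaussianFourier.integrable_cexp_neg_mul_sq_norm_add (V := ℂ)
      (b := ((ν/2 : ℝ) : ℂ)) (by simpa using half_pos hν) 0 0).norm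
    refine h.congr (Filter.Eventually.of_forall fun z => ?_)
    have : (-((ν/2 : ℝ) : ℂ) * ((‖z‖ : ℝ) : ℂ) ^ 2 + 0 * ((inner ℝ (0 : ℂ) z : ℝ) : ℂ))
        = ((-(ν/2) * ‖z‖ ^ 2 : ℝ) : ℂ) := by
      push_cast; ring
    simp only [this, Complex.norm_exp_ofReal]
  refine (hint.const_mul ((A.factorial : ℝ) * (2 / ν) ^ A)).mono'
    (Continuous.aestronglyMeasurable (by fun_prop)) (Filter.Eventually.of_forall fun z => ?_)
  have ht : (0:ℝ) ≤ ‖z‖ ^ 2 := by positivity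
  have key := Real.pow_div_factorial_le_exp (x := (ν/2) * ‖z‖ ^ 2) (by positivity) A
  rw [Real.norm_eq_abs,
    _root_.abs_of_nonneg (by positivity : (0:ℝ) ≤ ‖z‖ ^ (2 * A) * Real.exp (-ν * ‖z‖ ^ 2))]
  have hpow : ‖z‖ ^ (2 * A) = (‖z‖ ^ 2) ^ A := by rw [← pow_mul]
  have hb : (‖z‖ ^ 2) ^ A ≤ (A.factorial : ℝ) * (2/ν) ^ A * Real.exp ((ν/2) * ‖z‖ ^ 2) := by
    have h2 : ((ν/2) * ‖z‖ ^ 2) ^ A ≤ (A.factorial : ℝ) * Real.exp ((ν/2) * ‖z‖ ^ 2) := by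
      rw [div_le_iff₀ (by positivity : (0:ℝ) < (A.factorial : ℝ))] at key
      linarith [key]
    have h3 : (‖z‖ ^ 2) ^ A = (2/ν) ^ A * ((ν/2) * ‖z‖ ^ 2) ^ A := by
      rw [← mul_pow]
      congr 1
      field_simp
    rw [h3]
    calc (2/ν) ^ A * ((ν/2) * ‖z‖ ^ 2) ^ A
        ≤ (2/ν) ^ A * ((A.factorial : ℝ) * Real.exp ((ν/2) * ‖z‖ ^ 2)) := by
          exact mul_le_mul_of_nonneg_left h2 (by positivity)
      _ = (A.factorial : ℝ) * (2/ν) ^ A * Real.exp ((ν/2) * ‖z‖ ^ 2) := by ring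
  calc ‖z‖ ^ (2 * A) * Real.exp (-ν * ‖z‖ ^ 2)
      = (‖z‖ ^ 2) ^ A * Real.exp (-ν * ‖z‖ ^ 2) := by rw [hpow]
    _ ≤ ((A.factorial : ℝ) * (2/ν) ^ A * Real.exp ((ν/2) * ‖z‖ ^ 2)) * Real.exp (-ν * ‖z‖ ^ 2) := by
        exact mul_le_mul_of_nonneg_right hb (Real.exp_nonneg _)
    _ = (A.factorial : ℝ) * (2/ν) ^ A * Real.exp (-(ν/2) * ‖z‖ ^ 2) := by
        rw [mul_assoc, ← Real.exp_add]
        ring_nf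
lemma expansion (ν : ℝ) (m n : ℕ) (z : ℂ) :
    cHermite ν m n z * (starRingEnd ℂ) (cHermite ν m n z) =
      ∑ k ∈ Finset.range (min m n + 1), ∑ l ∈ Finset.range (min m n + 1),
        ((((m.factorial : ℝ) * (n.factorial : ℝ)) ^ 2 *
          ((-1 : ℝ) ^ (k + l) * ν ^ (m + n - k) * ν ^ (m + n - l) /
            (((k.factorial : ℝ) * ((m - k).factorial : ℝ) * ((n - k).factorial : ℝ)) *
             ((l.factorial : ℝ) * ((m - l).factorial : ℝ) * ((n - l).factorial : ℝ)))) *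
          ‖z‖ ^ (2 * (m + n - k - l)) : ℝ) : ℂ) := by
  have hconj : (starRingEnd ℂ) (cHermite ν m n z)
      = (m.factorial : ℂ) * (n.factorial : ℂ) *
        ∑ l ∈ Finset.range (min m n + 1),
          (-1 : ℂ) ^ l * (ν : ℂ) ^ (m + n - l) * (starRingEnd ℂ z) ^ (m - l) * z ^ (n - l) /
            ((l.factorial : ℂ) * ((m - l).factorial : ℂ) * ((n - l).factorial : ℂ)) := by
    unfold cHermite
    rw [map_mul, map_mul, map_sum]
    simp only [map_div₀, map_mul, map_pow, map_neg, map_one, Complex.conj_conj,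
      Complex.conj_ofReal, map_natCast]
  rw [hconj]
  unfold cHermite
  rw [mul_mul_mul_comm, Finset.sum_mul_sum]
  simp_rw [Finset.mul_sum]
  refine Finset.sum_congr rfl fun k hk => Finset.sum_congr rfl fun l hl => ?_
  rw [Finset.mem_range] at hk hl
  have hkm : k ≤ m := le_trans (by omega) (min_le_left m n)
  have hkn : k ≤ n := le_trans (by omega) (min_le_right m n)
  have hlm : l ≤ m := le_trans (by omega) (min_le_left m n)
  have hln : l ≤ n := le_trans (by omega) (min_le_right m n)
  have hz : z ^ (m - k) * (starRingEnd ℂ z) ^ (n - k) *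
      ((starRingEnd ℂ z) ^ (m - l) * z ^ (n - l))
      = ((‖z‖ : ℝ) : ℂ) ^ (2 * (m + n - k - l)) := by
    have h1 : z ^ (m - k) * z ^ (n - l) = z ^ (m + n - k - l) := by
      rw [← pow_add]; congr 1; omega
    have h2 : (starRingEnd ℂ z) ^ (n - k) * (starRingEnd ℂ z) ^ (m - l)
        = (starRingEnd ℂ z) ^ (m + n - k - l) := by
      rw [← pow_add]; congr 1; omega
    calc z ^ (m - k) * (starRingEnd ℂ z) ^ (n - k) *
          ((starRingEnd ℂ z) ^ (m - l) * z ^ (n - l))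
        = (z ^ (m - k) * z ^ (n - l)) *
            ((starRingEnd ℂ z) ^ (n - k) * (starRingEnd ℂ z) ^ (m - l)) := by ring
      _ = (z * starRingEnd ℂ z) ^ (m + n - k - l) := by rw [h1, h2, mul_pow]
      _ = (((‖z‖ : ℝ) : ℂ) ^ 2) ^ (m + n - k - l) := by
          rw [Complex.mul_conj, Complex.normSq_eq_norm_sq,
            Complex.ofReal_pow]
      _ = ((‖z‖ : ℝ) : ℂ) ^ (2 * (m + n - k - l)) := by rw [← pow_mul]
  have expand :
      (m.factorial : ℂ) * (n.factorial : ℂ) * ((m.factorial : ℂ) * (n.factorial : ℂ)) *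
        ((-1 : ℂ) ^ k * (ν : ℂ) ^ (m + n - k) * z ^ (m - k) * (starRingEnd ℂ z) ^ (n - k) /
            ((k.factorial : ℂ) * ((m - k).factorial : ℂ) * ((n - k).factorial : ℂ)) *
         ((-1 : ℂ) ^ l * (ν : ℂ) ^ (m + n - l) * (starRingEnd ℂ z) ^ (m - l) * z ^ (n - l) /
            ((l.factorial : ℂ) * ((m - l).factorial : ℂ) * ((n - l).factorial : ℂ))))
      = ((m.factorial : ℂ) * (n.factorial : ℂ)) ^ 2 *
          ((-1 : ℂ) ^ (k + l) * (ν : ℂ) ^ (m + n - k) * (ν : ℂ) ^ (m + n - l) /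
            (((k.factorial : ℂ) * ((m - k).factorial : ℂ) * ((n - k).factorial : ℂ)) *
             ((l.factorial : ℂ) * ((m - l).factorial : ℂ) * ((n - l).factorial : ℂ)))) *
          (z ^ (m - k) * (starRingEnd ℂ z) ^ (n - k) *
            ((starRingEnd ℂ z) ^ (m - l) * z ^ (n - l))) := by
    rw [pow_add]; ring
  rw [expand, hz]
  push_cast
  ring

lemma pointwise (ν : ℝ) (m n : ℕ) (z : ℂ) :
    ‖cHermite ν m n z‖ ^ 2 =
      ∑ k ∈ Finset.range (min m n + 1), ∑ l ∈ Finset.range (min m n + 1),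
        (((m.factorial : ℝ) * (n.factorial : ℝ)) ^ 2 *
          ((-1 : ℝ) ^ (k + l) * ν ^ (m + n - k) * ν ^ (m + n - l) /
            (((k.factorial : ℝ) * ((m - k).factorial : ℝ) * ((n - k).factorial : ℝ)) *
             ((l.factorial : ℝ) * ((m - l).factorial : ℝ) * ((n - l).factorial : ℝ))))) *
          ‖z‖ ^ (2 * (m + n - k - l)) := by
  rw [← Complex.ofReal_inj]
  calc ((‖cHermite ν m n z‖ ^ 2 : ℝ) : ℂ)
      = cHermite ν m n z * (starRingEnd ℂ) (cHermite ν m n z) := by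
        rw [Complex.mul_conj]; norm_cast; exact Complex.sq_norm _
    _ = _ := by rw [expansion]; push_cast; ring

theorem cHermite_norm_squared (ν : ℝ) (hν : 0 < ν) (m n : ℕ) :
    ∫ z : ℂ, ‖cHermite ν m n z‖ ^ 2 * Real.exp (-ν * ‖z‖ ^ 2)
      = (π / ν) * ν ^ (m + n) * (m.factorial : ℝ) * (n.factorial : ℝ) := by
  have hpt : ∀ z : ℂ, ‖cHermite ν m n z‖ ^ 2 * Real.exp (-ν * ‖z‖ ^ 2)
      = ∑ k ∈ Finset.range (min m n + 1), ∑ l ∈ Finset.range (min m n + 1),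
          ((((m.factorial : ℝ) * (n.factorial : ℝ)) ^ 2 *
            ((-1 : ℝ) ^ (k + l) * ν ^ (m + n - k) * ν ^ (m + n - l) /
              (((k.factorial : ℝ) * ((m - k).factorial : ℝ) * ((n - k).factorial : ℝ)) *
               ((l.factorial : ℝ) * ((m - l).factorial : ℝ) * ((n - l).factorial : ℝ))))) *
            (‖z‖ ^ (2 * (m + n - k - l)) * Real.exp (-ν * ‖z‖ ^ 2))) := by
    intro z
    rw [pointwise ν m n z, Finset.sum_mul]
    refine Finset.sum_congr rfl fun k _ => ?_
    rw [Finset.sum_mul]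
    refine Finset.sum_congr rfl fun l _ => ?_
    ring
  simp_rw [hpt]
  rw [integral_finset_sum _ (fun k _ => integrable_finset_sum _ (fun l _ =>
      ((moment_integrable ν hν (m + n - k - l)).const_mul _)))]
  have hk : ∀ k ∈ Finset.range (min m n + 1),
      (∫ z : ℂ, ∑ l ∈ Finset.range (min m n + 1),
          ((((m.factorial : ℝ) * (n.factorial : ℝ)) ^ 2 *
            ((-1 : ℝ) ^ (k + l) * ν ^ (m + n - k) * ν ^ (m + n - l) /
              (((k.factorial : ℝ) * ((m - k).factorial : ℝ) * ((n - k).factorial : ℝ)) *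
               ((l.factorial : ℝ) * ((m - l).factorial : ℝ) * ((n - l).factorial : ℝ))))) *
            (‖z‖ ^ (2 * (m + n - k - l)) * Real.exp (-ν * ‖z‖ ^ 2))))
      = ∑ l ∈ Finset.range (min m n + 1),
          ((((m.factorial : ℝ) * (n.factorial : ℝ)) ^ 2 *
            ((-1 : ℝ) ^ (k + l) * ν ^ (m + n - k) * ν ^ (m + n - l) /
              (((k.factorial : ℝ) * ((m - k).factorial : ℝ) * ((n - k).factorial : ℝ)) *
               ((l.factorial : ℝ) * ((m - l).factorial : ℝ) * ((n - l).factorial : ℝ))))) *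
            (π * (((m + n - k - l).factorial : ℕ) : ℝ) / ν ^ ((m + n - k - l) + 1))) := by
    intro k _
    rw [integral_finset_sum _ (fun l _ =>
      (moment_integrable ν hν (m + n - k - l)).const_mul _)]
    refine Finset.sum_congr rfl fun l _ => ?_
    rw [integral_const_mul, moment ν hν]
  rw [Finset.sum_congr rfl hk]
  have hterm : ∀ k ∈ Finset.range (min m n + 1), ∀ l ∈ Finset.range (min m n + 1),
      ((((m.factorial : ℝ) * (n.factorial : ℝ)) ^ 2 *
        ((-1 : ℝ) ^ (k + l) * ν ^ (m + n - k) * ν ^ (m + n - l) /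
          (((k.factorial : ℝ) * ((m - k).factorial : ℝ) * ((n - k).factorial : ℝ)) *
           ((l.factorial : ℝ) * ((m - l).factorial : ℝ) * ((n - l).factorial : ℝ))))) *
        (π * (((m + n - k - l).factorial : ℕ) : ℝ) / ν ^ ((m + n - k - l) + 1)))
      = (π / ν * ν ^ (m + n) * ((m.factorial : ℝ) * (n.factorial : ℝ)) ^ 2) *
          ((-1 : ℝ) ^ (k + l) * ((m + n - k - l).factorial : ℝ) /
            (((k.factorial : ℝ) * ((m - k).factorial : ℝ) * ((n - k).factorial : ℝ)) *
             ((l.factorial : ℝ) * ((m - l).factorial : ℝ) * ((n - l).factorial : ℝ)))) := by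
    intro k hk' l hl'
    rw [Finset.mem_range] at hk' hl'
    have hkm : k ≤ m := le_trans (by omega) (min_le_left m n)
    have hkn : k ≤ n := le_trans (by omega) (min_le_right m n)
    have hlm : l ≤ m := le_trans (by omega) (min_le_left m n)
    have hln : l ≤ n := le_trans (by omega) (min_le_right m n)
    have hpow : ν ^ (m + n - k) * ν ^ (m + n - l) * ν
        = ν ^ ((m + n - k - l) + 1) * ν ^ (m + n) := by
      rw [← pow_add, ← pow_succ, ← pow_add]
      congr 1
      omega
    have hq : ν ^ ((m + n - k - l) + 1) ≠ 0 := by positivity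
    have hpp : ν ^ (m + n - k) * ν ^ (m + n - l) * π / ν ^ ((m + n - k - l) + 1)
        = π / ν * ν ^ (m + n) := by
      rw [div_mul_eq_mul_div, div_eq_div_iff hq hν.ne']
      linear_combination π * hpow
    calc _ = ((-1 : ℝ) ^ (k + l) * ((m + n - k - l).factorial : ℝ) /
            (((k.factorial : ℝ) * ((m - k).factorial : ℝ) * ((n - k).factorial : ℝ)) *
             ((l.factorial : ℝ) * ((m - l).factorial : ℝ) * ((n - l).factorial : ℝ)))) *
            (((m.factorial : ℝ) * (n.factorial : ℝ)) ^ 2) *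
            (ν ^ (m + n - k) * ν ^ (m + n - l) * π / ν ^ ((m + n - k - l) + 1)) := by
          ring
      _ = _ := by rw [hpp]; ring
  calc ∑ k ∈ Finset.range (min m n + 1), ∑ l ∈ Finset.range (min m n + 1),
        ((((m.factorial : ℝ) * (n.factorial : ℝ)) ^ 2 *
          ((-1 : ℝ) ^ (k + l) * ν ^ (m + n - k) * ν ^ (m + n - l) /
            (((k.factorial : ℝ) * ((m - k).factorial : ℝ) * ((n - k).factorial : ℝ)) *
             ((l.factorial : ℝ) * ((m - l).factorial : ℝ) * ((n - l).factorial : ℝ))))) *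
          (π * (((m + n - k - l).factorial : ℕ) : ℝ) / ν ^ ((m + n - k - l) + 1)))
      = (π / ν * ν ^ (m + n) * ((m.factorial : ℝ) * (n.factorial : ℝ)) ^ 2) *
          ∑ k ∈ Finset.range (min m n + 1), ∑ l ∈ Finset.range (min m n + 1),
            ((-1 : ℝ) ^ (k + l) * ((m + n - k - l).factorial : ℝ) /
              (((k.factorial : ℝ) * ((m - k).factorial : ℝ) * ((n - k).factorial : ℝ)) *
               ((l.factorial : ℝ) * ((m - l).factorial : ℝ) * ((n - l).factorial : ℝ)))) := by
        rw [Finset.mul_sum]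
        refine Finset.sum_congr rfl fun k hk' => ?_
        rw [Finset.mul_sum]
        exact Finset.sum_congr rfl fun l hl' => hterm k hk' l hl'
    _ = (π / ν) * ν ^ (m + n) * (m.factorial : ℝ) * (n.factorial : ℝ) := by
        rw [comb m n]
        have f1 : (m.factorial : ℝ) ≠ 0 := Nat.cast_ne_zero.mpr (Nat.factorial_ne_zero _)
        have f2 : (n.factorial : ℝ) ≠ 0 := Nat.cast_ne_zero.mpr (Nat.factorial_ne_zero _)
        field_simp
end

section
/- For ν > 0, the complex Hermite polynomial H_{m,n}^ν(z, z̄) is an eigenfunction of the magnetic Laplacian Δ_ν = -∂²/(∂z ∂z̄) + ν z ∂/∂z with eigenvalue ν m, i.e., Δ_ν H_{m,n}^ν = ν m H_{m,n}^ν. -/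
open scoped Real
open MeasureTheory Complex

/-- Polarized complex Hermite polynomial: the same formula with `w` in place of `z̄`,
so that the Wirtinger derivatives `∂/∂z`, `∂/∂z̄` become ordinary derivatives in the
first and second slot respectively. -/
noncomputable def cHermite2 (ν : ℝ) (m n : ℕ) (z w : ℂ) : ℂ :=
  (m.factorial : ℂ) * (n.factorial : ℂ) *
    ∑ k ∈ Finset.range (min m n + 1),
      (-1 : ℂ) ^ k * (ν : ℂ) ^ (m + n - k) * z ^ (m - k) * w ^ (n - k) /
        ((k.factorial : ℂ) * ((m - k).factorial : ℂ) * ((n - k).factorial : ℂ))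

/-- Denominator of the `k`-th term. -/
noncomputable def cB (m n k : ℕ) : ℂ :=
  (k.factorial : ℂ) * ((m - k).factorial : ℂ) * ((n - k).factorial : ℂ)

/-- The `k`-th term of `cHermite2` (without the factorial prefactor). -/
noncomputable def cG (ν : ℝ) (m n : ℕ) (z w : ℂ) (k : ℕ) : ℂ :=
  (-1 : ℂ) ^ k * (ν : ℂ) ^ (m + n - k) * z ^ (m - k) * w ^ (n - k) /
    ((k.factorial : ℂ) * ((m - k).factorial : ℂ) * ((n - k).factorial : ℂ))

/-- `∂_z` of the `k`-th term. -/
noncomputable def cF (ν : ℝ) (m n : ℕ) (z w : ℂ) (k : ℕ) : ℂ :=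
  (-1 : ℂ) ^ k * (ν : ℂ) ^ (m + n - k) * (((m - k : ℕ) : ℂ) * z ^ (m - k - 1)) * w ^ (n - k) /
    ((k.factorial : ℂ) * ((m - k).factorial : ℂ) * ((n - k).factorial : ℂ))

/-- `∂_z ∂_w` of the `k`-th term. -/
noncomputable def cE (ν : ℝ) (m n : ℕ) (z w : ℂ) (k : ℕ) : ℂ :=
  (-1 : ℂ) ^ k * (ν : ℂ) ^ (m + n - k) * (((m - k : ℕ) : ℂ) * z ^ (m - k - 1)) *
      (((n - k : ℕ) : ℂ) * w ^ (n - k - 1)) /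
    ((k.factorial : ℂ) * ((m - k).factorial : ℂ) * ((n - k).factorial : ℂ))

lemma cHermite2_hasDerivAt_snd (ν : ℝ) (m n : ℕ) (t w : ℂ) :
    HasDerivAt (fun s : ℂ => cHermite2 ν m n t s)
      ((m.factorial : ℂ) * (n.factorial : ℂ) *
        ∑ k ∈ Finset.range (min m n + 1),
          (-1 : ℂ) ^ k * (ν : ℂ) ^ (m + n - k) * t ^ (m - k) *
              (((n - k : ℕ) : ℂ) * w ^ (n - k - 1)) /
            ((k.factorial : ℂ) * ((m - k).factorial : ℂ) * ((n - k).factorial : ℂ))) w := by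
  unfold cHermite2
  refine HasDerivAt.const_mul _ (HasDerivAt.fun_sum fun k _ => ?_)
  exact ((hasDerivAt_pow (n - k) w).const_mul
    ((-1 : ℂ) ^ k * (ν : ℂ) ^ (m + n - k) * t ^ (m - k))).div_const _

lemma cHermite2_hasDerivAt_mixed (ν : ℝ) (m n : ℕ) (z w : ℂ) :
    HasDerivAt (fun t : ℂ =>
      (m.factorial : ℂ) * (n.factorial : ℂ) *
        ∑ k ∈ Finset.range (min m n + 1),
          (-1 : ℂ) ^ k * (ν : ℂ) ^ (m + n - k) * t ^ (m - k) *
              (((n - k : ℕ) : ℂ) * w ^ (n - k - 1)) /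
            ((k.factorial : ℂ) * ((m - k).factorial : ℂ) * ((n - k).factorial : ℂ)))
      ((m.factorial : ℂ) * (n.factorial : ℂ) *
        ∑ k ∈ Finset.range (min m n + 1), cE ν m n z w k) z := by
  refine HasDerivAt.const_mul _ (HasDerivAt.fun_sum fun k _ => ?_)
  exact (((hasDerivAt_pow (m - k) z).const_mul
    ((-1 : ℂ) ^ k * (ν : ℂ) ^ (m + n - k))).mul_const
      (((n - k : ℕ) : ℂ) * w ^ (n - k - 1))).div_const _

lemma cHermite2_hasDerivAt_fst (ν : ℝ) (m n : ℕ) (z w : ℂ) :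
    HasDerivAt (fun t : ℂ => cHermite2 ν m n t w)
      ((m.factorial : ℂ) * (n.factorial : ℂ) *
        ∑ k ∈ Finset.range (min m n + 1), cF ν m n z w k) z := by
  unfold cHermite2
  refine HasDerivAt.const_mul _ (HasDerivAt.fun_sum fun k _ => ?_)
  exact (((hasDerivAt_pow (m - k) z).const_mul
    ((-1 : ℂ) ^ k * (ν : ℂ) ^ (m + n - k))).mul_const (w ^ (n - k))).div_const _

theorem cHermite_eigenfunction (ν : ℝ) (hν : 0 < ν) (m n : ℕ) (z w : ℂ) :
    -(deriv (fun t : ℂ => deriv (fun s : ℂ => cHermite2 ν m n t s) w) z) +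
        (ν : ℂ) * z * deriv (fun t : ℂ => cHermite2 ν m n t w) z
      = (ν : ℂ) * (m : ℂ) * cHermite2 ν m n z w := by
  have hNm : min m n ≤ m := Nat.min_le_left m n
  have hNn : min m n ≤ n := Nat.min_le_right m n
  have h2 : (fun t : ℂ => deriv (fun s : ℂ => cHermite2 ν m n t s) w)
      = fun t : ℂ =>
        (m.factorial : ℂ) * (n.factorial : ℂ) *
          ∑ k ∈ Finset.range (min m n + 1),
            (-1 : ℂ) ^ k * (ν : ℂ) ^ (m + n - k) * t ^ (m - k) *
                (((n - k : ℕ) : ℂ) * w ^ (n - k - 1)) /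
              ((k.factorial : ℂ) * ((m - k).factorial : ℂ) * ((n - k).factorial : ℂ)) :=
    funext fun t => (cHermite2_hasDerivAt_snd ν m n t w).deriv
  rw [h2, (cHermite2_hasDerivAt_mixed ν m n z w).deriv,
    (cHermite2_hasDerivAt_fst ν m n z w).deriv]
  have hG : cHermite2 ν m n z w
      = (m.factorial : ℂ) * (n.factorial : ℂ) *
          ∑ k ∈ Finset.range (min m n + 1), cG ν m n z w k := rfl
  rw [hG]
  -- termwise identity for the F-sum
  have hF : ∀ k ∈ Finset.range (min m n + 1),
      (ν : ℂ) * z * cF ν m n z w k = (ν : ℂ) * ((m - k : ℕ) : ℂ) * cG ν m n z w k := by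
    intro k _
    rcases Nat.eq_zero_or_pos (m - k) with h | h
    · simp [cF, cG, h]
    · obtain ⟨a, ha⟩ := Nat.exists_eq_succ_of_ne_zero h.ne'
      unfold cF cG
      rw [show m - k - 1 = a by omega, ha, pow_succ]
      ring
  have hF' : (ν : ℂ) * z * ∑ k ∈ Finset.range (min m n + 1), cF ν m n z w k
      = ∑ k ∈ Finset.range (min m n + 1),
          (ν : ℂ) * ((m - k : ℕ) : ℂ) * cG ν m n z w k := by
    rw [Finset.mul_sum]; exact Finset.sum_congr rfl hF
  -- the E-sum reindexes to the ν k G sum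
  have hEN : cE ν m n z w (min m n) = 0 := by
    have : m - min m n = 0 ∨ n - min m n = 0 := by omega
    rcases this with h | h <;> simp [cE, h]
  have hEk : ∀ k ∈ Finset.range (min m n),
      cE ν m n z w k = -((ν : ℂ) * ((k + 1 : ℕ) : ℂ) * cG ν m n z w (k + 1)) := by
    intro k hk
    have hkN : k < min m n := Finset.mem_range.mp hk
    have hk1m : k + 1 ≤ m := by omega
    have hk1n : k + 1 ≤ n := by omega
    unfold cE cG
    rw [show m - k - 1 = m - (k + 1) by omega, show n - k - 1 = n - (k + 1) by omega,
      show m - k = (m - (k + 1)) + 1 by omega, show n - k = (n - (k + 1)) + 1 by omega,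
      show m + n - k = (m + n - (k + 1)) + 1 by omega]
    set a := m - (k + 1) with ha
    set b := n - (k + 1) with hb
    set c := m + n - (k + 1) with hc
    simp only [Nat.factorial_succ, pow_succ]
    have hkf : ((k.factorial : ℂ)) ≠ 0 := Nat.cast_ne_zero.mpr k.factorial_ne_zero
    have haf : ((a.factorial : ℂ)) ≠ 0 := Nat.cast_ne_zero.mpr a.factorial_ne_zero
    have hbf : ((b.factorial : ℂ)) ≠ 0 := Nat.cast_ne_zero.mpr b.factorial_ne_zero
    have hk1 : ((k : ℂ) + 1) ≠ 0 := Nat.cast_add_one_ne_zero k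
    have ha1 : ((a : ℂ) + 1) ≠ 0 := Nat.cast_add_one_ne_zero a
    have hb1 : ((b : ℂ) + 1) ≠ 0 := Nat.cast_add_one_ne_zero b
    push_cast
    field_simp [hkf, haf, hbf, hk1, ha1, hb1]
  have hE : ∑ k ∈ Finset.range (min m n + 1), cE ν m n z w k
      = -∑ k ∈ Finset.range (min m n + 1), (ν : ℂ) * (k : ℂ) * cG ν m n z w k := by
    rw [Finset.sum_range_succ, hEN, add_zero, Finset.sum_range_succ']
    simp only [Nat.cast_zero, mul_zero, zero_mul, add_zero]
    rw [Finset.sum_congr rfl hEk, Finset.sum_neg_distrib]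
  have key : (ν : ℂ) * z * (∑ k ∈ Finset.range (min m n + 1), cF ν m n z w k)
        - ∑ k ∈ Finset.range (min m n + 1), cE ν m n z w k
      = (ν : ℂ) * (m : ℂ) * ∑ k ∈ Finset.range (min m n + 1), cG ν m n z w k := by
    rw [hF', hE, sub_neg_eq_add, ← Finset.sum_add_distrib, Finset.mul_sum]
    refine Finset.sum_congr rfl fun k hk => ?_
    have hkm : k ≤ m := by
      have := Finset.mem_range.mp hk; omega
    rw [Nat.cast_sub hkm]
    ring
  linear_combination ((m.factorial : ℂ) * (n.factorial : ℂ)) * key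
end
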